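/- Let E be a real normed space, Y a finite label set, and μ a probability measure on E × Y. Let ℓ_F, ℓ_G : E → Y → ℝ be nonnegative losses such that (x,y) ↦ ℓ_F(x,y) and (x,y) ↦ ℓ_G(x,y) are measurable and integrable with respect to μ, and such that for every label y' the maps x ↦ ℓ_F(x,y') and x ↦ ℓ_G(x,y') are Lipschitz with constants B_F and B_G, respectively. Let C_F, C_G : E → Y be loss-calibrated classifiers for ℓ_F and ℓ_G (i.e., ℓ(z, C(z)) ≤ ℓ(z, y') for all z, y'), and let A : E → E be an attack map with ‖A(x) − x‖ ≤ ε for all x. Assume that for μ-almost every (x, y): ℓ_F(x, y') ≥ m_F and ℓ_G(x, y') ≥ m_G for every label y' ≠ y, with m_F − 2B_F ε > 0 and m_G − 2B_G ε > 0. Let T = {(x, y) : C_F(x) = y ∧ C_G(x) = y ∧ C_F(A(x)) ≠ y ∧ C_G(A(x)) ≠ y} and assume T is measurable. Then μ(T) ≤ ξ_F/(m_F − 2B_F ε) + ξ_G/(m_G − 2B_G ε), where ξ_F = ∫ ℓ_F(x,y) dμ(x,y) and ξ_G = ∫ ℓ_G(x,y) dμ(x,y) are the empirical risks of the two models. -/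

import Mathlib

open MeasureTheory

/-- Transferability upper bound (Proposition 1, Lipschitz form): the probability of the
transferability event is at most the sum of each model's empirical risk divided by its
denominator `m − 2Bε`. -/
theorem transferability_upper_bound
    {E : Type*} [NormedAddCommGroup E] [NormedSpace ℝ E] [MeasurableSpace E]
    {Y : Type*} [Fintype Y] [MeasurableSpace Y]
    (μ : Measure (E × Y)) [IsProbabilityMeasure μ]
    (ℓF ℓG : E → Y → ℝ)
    (hF0 : ∀ x y, 0 ≤ ℓF x y) (hG0 : ∀ x y, 0 ≤ ℓG x y)
    (hFm : Measurable (fun p : E × Y => ℓF p.1 p.2))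
    (hGm : Measurable (fun p : E × Y => ℓG p.1 p.2))
    (hFi : Integrable (fun p : E × Y => ℓF p.1 p.2) μ)
    (hGi : Integrable (fun p : E × Y => ℓG p.1 p.2) μ)
    (BF BG : ℝ) (hBF : 0 ≤ BF) (hBG : 0 ≤ BG)
    (hFlip : ∀ y' : Y, LipschitzWith BF.toNNReal (fun x => ℓF x y'))
    (hGlip : ∀ y' : Y, LipschitzWith BG.toNNReal (fun x => ℓG x y'))
    (CF CG : E → Y)
    (hcalF : ∀ z y', ℓF z (CF z) ≤ ℓF z y')
    (hcalG : ∀ z y', ℓG z (CG z) ≤ ℓG z y')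
    (A : E → E) (ε : ℝ) (hA : ∀ x, ‖A x - x‖ ≤ ε)
    (mF mG : ℝ)
    (hmargin : ∀ᵐ p ∂μ, ∀ y' : Y, y' ≠ p.2 → ℓF p.1 y' ≥ mF ∧ ℓG p.1 y' ≥ mG)
    (hDF : 0 < mF - 2 * BF * ε) (hDG : 0 < mG - 2 * BG * ε)
    (T : Set (E × Y))
    (hT : T = {p : E × Y | CF p.1 = p.2 ∧ CG p.1 = p.2 ∧
      CF (A p.1) ≠ p.2 ∧ CG (A p.1) ≠ p.2})
    (hTmeas : MeasurableSet T) :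
    (μ T).toReal ≤
      (∫ p, ℓF p.1 p.2 ∂μ) / (mF - 2 * BF * ε) +
      (∫ p, ℓG p.1 p.2 ∂μ) / (mG - 2 * BG * ε) := by
  have hε : 0 ≤ ε := le_trans (norm_nonneg _) (hA 0)
  -- key pointwise bound on T for ℓF
  have key : ∀ᵐ p ∂μ, p ∈ T → mF - 2 * BF * ε ≤ ℓF p.1 p.2 := by
    filter_upwards [hmargin] with p hm hp
    rw [hT] at hp
    obtain ⟨h1, h2, h3, h4⟩ := hp
    have lip : ∀ y' : Y, |ℓF (A p.1) y' - ℓF p.1 y'| ≤ BF * ε := by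
      intro y'
      have h := (hFlip y').dist_le_mul (A p.1) p.1
      rw [Real.dist_eq, dist_eq_norm, Real.coe_toNNReal BF hBF] at h
      exact h.trans (mul_le_mul_of_nonneg_left (hA p.1) hBF)
    have hm1 : mF ≤ ℓF p.1 (CF (A p.1)) := (hm _ h3).1
    have hc : ℓF (A p.1) (CF (A p.1)) ≤ ℓF (A p.1) p.2 := hcalF (A p.1) p.2
    have l1 := abs_le.1 (lip (CF (A p.1)))
    have l2 := abs_le.1 (lip p.2)
    linarith [l1.1, l2.1, l2.2]
  have hd : (mF - 2 * BF * ε) * (μ T).toReal ≤ ∫ p, ℓF p.1 p.2 ∂μ := by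
    have h1 : ∫ _ in T, (mF - 2 * BF * ε) ∂μ ≤ ∫ p in T, ℓF p.1 p.2 ∂μ := by
      apply setIntegral_mono_ae_restrict (integrableOn_const (measure_lt_top μ T).ne)
        hFi.integrableOn
      exact (ae_restrict_iff' hTmeas).2 key
    rw [setIntegral_const, smul_eq_mul, mul_comm] at h1
    exact h1.trans (setIntegral_le_integral hFi (Filter.Eventually.of_forall fun p => hF0 p.1 p.2))
  have h2 : (μ T).toReal ≤ (∫ p, ℓF p.1 p.2 ∂μ) / (mF - 2 * BF * ε) := by
    rw [le_div_iff₀ hDF]; linarith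
  have h3 : 0 ≤ (∫ p, ℓG p.1 p.2 ∂μ) / (mG - 2 * BG * ε) :=
    div_nonneg (integral_nonneg fun p => hG0 p.1 p.2) hDG.le
  linarith
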